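/- Fix n, d, s ∈ ℕ with n ≥ 1, s even, 2 ≤ s ≤ d, and fix ε > 0 and σ > 0. Assume 2n·log 2 + log 2 ≤ (1/2) · log(C(d,s) · C(s, s/2)). Then there exists ε' > 0 such that for every measurable estimator β̂ : ℝ^{n×d} × ℝ^n → ℝ^d whose values lie in F₃(d,s,ε), under the joint law in which β* is uniform on F₃(d,s,ε), X ∈ ℝ^{n×d} has i.i.d. entries gaussianReal 0 (1/n), e ∈ ℝ^n has i.i.d. entries gaussianReal 0 σ², and β*, X, e are mutually independent, the probability that ‖β̂(X, sign(X·β* + e))/‖β̂(X, sign(X·β* + e))‖ − β*/‖β*‖‖ ≥ ε' is at least 1/2. -/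

import Mathlib

open MeasureTheory ProbabilityTheory Real
open scoped ENNReal NNReal

/-- The sign function, with `sign x = 1` for `x ≥ 0` and `-1` otherwise. -/
noncomputable def signFun (x : ℝ) : ℝ := if 0 ≤ x then 1 else -1

/-- The Euclidean (`ℓ₂`) norm of a vector. -/
noncomputable def l2norm {d : ℕ} (v : Fin d → ℝ) : ℝ := Real.sqrt (∑ i, v i ^ 2)

/-- The restricted ensemble `F₃(d,s,ε)` for one-bit compressed sensing. -/
noncomputable def F3 (d s : ℕ) (ε : ℝ) : Set (Fin d → ℝ) :=
  {β | ∃ A B : Finset (Fin d), Disjoint A B ∧ A.card = s / 2 ∧ B.card = s / 2 ∧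
    (∀ i ∈ A, β i = -ε) ∧ (∀ i ∈ B, β i = Real.sqrt (2 / s) + ε) ∧
    ∀ i ∉ A ∪ B, β i = 0}

namespace OneBitAux

variable {d s : ℕ} {ε : ℝ}

lemma mem_F3_values {β : Fin d → ℝ} (hβ : β ∈ F3 d s ε) (i : Fin d) :
    β i ∈ ({-ε, Real.sqrt (2 / s) + ε, 0} : Set ℝ) := by
  obtain ⟨A, B, hAB, hA, hB, hvA, hvB, h0⟩ := hβ
  by_cases hiA : i ∈ A
  · exact Or.inl (hvA i hiA)
  by_cases hiB : i ∈ B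
  · exact Or.inr (Or.inl (hvB i hiB))
  · exact Or.inr (Or.inr (h0 i (by simp [hiA, hiB])))

lemma F3_finite (d s : ℕ) (ε : ℝ) : (F3 d s ε).Finite := by
  have hsub : F3 d s ε ⊆
      Set.pi Set.univ (fun _ : Fin d => ({-ε, Real.sqrt (2 / s) + ε, 0} : Set ℝ)) := by
    intro β hβ i _
    exact mem_F3_values hβ i
  exact Set.Finite.subset
    (Set.Finite.pi fun _ =>
      (Set.finite_singleton _).insert _ |>.insert _) hsub

lemma F3_sum_sq {β : Fin d → ℝ} (hβ : β ∈ F3 d s ε) :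
    ∑ i, β i ^ 2 = (s / 2 : ℕ) * (ε ^ 2 + (Real.sqrt (2 / s) + ε) ^ 2) := by
  obtain ⟨A, B, hAB, hA, hB, hvA, hvB, h0⟩ := hβ
  have h1 : ∑ i, β i ^ 2 = ∑ i ∈ A ∪ B, β i ^ 2 := by
    refine (Finset.sum_subset (Finset.subset_univ _) ?_).symm
    intro i _ hi
    rw [h0 i hi]; ring
  have e1 : ∑ i ∈ A, β i ^ 2 = (s / 2 : ℕ) * ε ^ 2 := by
    calc ∑ i ∈ A, β i ^ 2 = ∑ _i ∈ A, ε ^ 2 :=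
          Finset.sum_congr rfl fun i hi => by rw [hvA i hi]; ring
      _ = _ := by rw [Finset.sum_const, hA, nsmul_eq_mul]
  have e2 : ∑ i ∈ B, β i ^ 2 = (s / 2 : ℕ) * (Real.sqrt (2 / s) + ε) ^ 2 := by
    calc ∑ i ∈ B, β i ^ 2 = ∑ _i ∈ B, (Real.sqrt (2 / s) + ε) ^ 2 :=
          Finset.sum_congr rfl fun i hi => by rw [hvB i hi]
      _ = _ := by rw [Finset.sum_const, hB, nsmul_eq_mul]
  rw [h1, Finset.sum_union hAB, e1, e2]
  ring

lemma F3_l2norm_pos (hε : 0 < ε) (hs2 : 2 ≤ s) {β : Fin d → ℝ} (hβ : β ∈ F3 d s ε) :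
    0 < l2norm β := by
  unfold l2norm
  rw [F3_sum_sq hβ]
  apply Real.sqrt_pos.2
  have h2 : 1 ≤ s / 2 := by omega
  have h2' : (1 : ℝ) ≤ (s / 2 : ℕ) := by exact_mod_cast h2
  nlinarith [sq_nonneg (Real.sqrt (2 / (s : ℝ)) + ε), sq_nonneg ε]

lemma F3_norm_injOn (hε : 0 < ε) (hs2 : 2 ≤ s) :
    Set.InjOn (fun β : Fin d → ℝ => fun i => β i / l2norm β) (F3 d s ε) := by
  intro β hβ β' hβ' h
  have hr : l2norm β = l2norm β' := by
    unfold l2norm; rw [F3_sum_sq hβ, F3_sum_sq hβ']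
  have h0 : 0 < l2norm β := F3_l2norm_pos hε hs2 hβ
  have h0' : 0 < l2norm β' := F3_l2norm_pos hε hs2 hβ'
  funext i
  have hi := congrFun h i
  simp only at hi
  rw [div_eq_div_iff h0.ne' h0'.ne'] at hi
  rw [← hr] at hi
  exact mul_right_cancel₀ h0.ne' hi

lemma l2norm_pos {v : Fin d → ℝ} (hv : v ≠ 0) : 0 < l2norm v := by
  unfold l2norm
  apply Real.sqrt_pos.2
  obtain ⟨i, hi⟩ : ∃ i, v i ≠ 0 := by
    by_contra h
    push_neg at h
    exact hv (funext h)
  exact Finset.sum_pos' (fun j _ => sq_nonneg _) ⟨i, Finset.mem_univ i, by positivity⟩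

lemma F3_ncard_ge (hε : 0 < ε) (heven : Even s) (hsd : s ≤ d) :
    d.choose s * s.choose (s / 2) ≤ (F3 d s ε).ncard := by
  classical
  set c : ℝ := Real.sqrt (2 / s) with hc
  have hc0 : 0 ≤ c := Real.sqrt_nonneg _
  have hcε : 0 < c + ε := by linarith
  have hhalf : s - s / 2 = s / 2 := by
    obtain ⟨k, hk⟩ := heven
    omega
  set Sig : Finset ((_ : Finset (Fin d)) × Finset (Fin d)) :=
    (Finset.powersetCard s (Finset.univ : Finset (Fin d))).sigma
      (fun S => S.powersetCard (s / 2)) with hSig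
  set φ : ((_ : Finset (Fin d)) × Finset (Fin d)) → (Fin d → ℝ) :=
    fun p => fun i => if i ∈ p.2 then c + ε else if i ∈ p.1 then -ε else 0 with hphi
  have hmemSig : ∀ p : ((_ : Finset (Fin d)) × Finset (Fin d)), p ∈ Sig →
      (p.2 ⊆ p.1 ∧ p.1.card = s ∧ p.2.card = s / 2) := by
    rintro ⟨S, B⟩ hp
    rw [hSig, Finset.mem_sigma, Finset.mem_powersetCard, Finset.mem_powersetCard] at hp
    exact ⟨hp.2.1, hp.1.2, hp.2.2⟩
  have hmem : ∀ p ∈ (Sig : Set _), φ p ∈ F3 d s ε := by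
    intro p hp
    obtain ⟨hBS, hS, hB⟩ := hmemSig p (by exact_mod_cast hp)
    refine ⟨p.1 \ p.2, p.2, Finset.sdiff_disjoint, ?_, hB, ?_, ?_, ?_⟩
    · rw [Finset.card_sdiff_of_subset hBS, hS, hB, hhalf]
    · intro i hi
      rw [Finset.mem_sdiff] at hi
      simp only [hphi, hi.1, hi.2, if_true, if_false]
    · intro i hi
      simp only [hphi, hi, if_true, hc]
    · intro i hi
      rw [Finset.mem_union, Finset.mem_sdiff] at hi
      push_neg at hi
      by_cases h1 : i ∈ p.1
      · exact absurd (hi.1 h1) (by simpa using hi.2)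
      · have h2 : i ∉ p.2 := fun h => h1 (hBS h)
        simp only [hphi, h2, h1, if_false]
  have hinj : Set.InjOn φ (Sig : Set _) := by
    rintro ⟨S, B⟩ hp ⟨S', B'⟩ hq h
    obtain ⟨hBS, hS, hB⟩ := hmemSig _ (by exact_mod_cast hp)
    obtain ⟨hBS', hS', hB'⟩ := hmemSig _ (by exact_mod_cast hq)
    have hval : ∀ (S B : Finset (Fin d)), B ⊆ S → ∀ i : Fin d,
        (i ∈ B ↔ φ ⟨S, B⟩ i = c + ε) ∧ (i ∈ S ↔ φ ⟨S, B⟩ i ≠ 0) := by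
      intro S B hBS i
      constructor
      · constructor
        · intro hi; simp only [hphi, hi, if_true]
        · intro hi
          by_contra hiB
          by_cases hiS : i ∈ S
          · simp only [hphi, hiB, hiS, if_false, if_true] at hi
            linarith
          · simp only [hphi, hiB, hiS, if_false] at hi
            linarith
      · constructor
        · intro hi
          by_cases hiB : i ∈ B
          · simp only [hphi, hiB, if_true]
            exact hcε.ne'
          · simp only [hphi, hiB, hi, if_false, if_true]
            intro h; linarith
        · intro hi
          by_contra hiS
          have hiB : i ∉ B := fun h => hiS (hBS h)
          simp only [hphi, hiB, hiS, if_false] at hi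
          exact hi rfl
    have hBB : B = B' := by
      ext i
      rw [(hval S B hBS i).1, (hval S' B' hBS' i).1, h]
    have hSS : S = S' := by
      ext i
      rw [(hval S B hBS i).2, (hval S' B' hBS' i).2, h]
    subst hBB; subst hSS; rfl
  have hcard : Sig.card = d.choose s * s.choose (s / 2) := by
    rw [hSig, Finset.card_sigma]
    have : ∀ S ∈ Finset.powersetCard s (Finset.univ : Finset (Fin d)),
        (S.powersetCard (s / 2)).card = s.choose (s / 2) := by
      intro S hS
      rw [Finset.mem_powersetCard] at hS
      rw [Finset.card_powersetCard, hS.2]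
    rw [Finset.sum_congr rfl this, Finset.sum_const, Finset.card_powersetCard,
      Finset.card_univ, Fintype.card_fin, smul_eq_mul]
  calc d.choose s * s.choose (s / 2) = (Sig : Set _).ncard := by
        rw [Set.ncard_coe_finset, hcard]
    _ ≤ (F3 d s ε).ncard :=
        Set.ncard_le_ncard_of_injOn φ hmem hinj (F3_finite d s ε)

lemma two_pow_le_of_log {n M : ℕ} (hM : 0 < M)
    (h : 2 * (n : ℝ) * Real.log 2 + Real.log 2 ≤ (1 / 2) * Real.log M) :
    2 ^ (n + 1) ≤ M := by
  have hlog2 : 0 < Real.log 2 := Real.log_pos (by norm_num)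
  have hn0 : (0 : ℝ) ≤ (n : ℝ) := Nat.cast_nonneg n
  have h2 : ((n : ℝ) + 1) * Real.log 2 ≤ Real.log M := by nlinarith
  have h3 : Real.log ((2 : ℝ) ^ (n + 1)) ≤ Real.log M := by
    rw [Real.log_pow]
    push_cast
    linarith
  have h4 : (2 : ℝ) ^ (n + 1) ≤ (M : ℝ) :=
    (Real.log_le_log_iff (by positivity) (by exact_mod_cast hM)).mp h3
  exact_mod_cast h4

lemma count_eq_ncard {α : Type*} [MeasurableSpace α] [MeasurableSingletonClass α]
    {t : Set α} (ht : t.Finite) :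
    Measure.count t = (t.ncard : ℝ≥0∞) := by
  rw [Measure.count_apply_finite t ht, Set.ncard_eq_toFinset_card t ht]

lemma slice_ncard_le (hε : 0 < ε) (hs2 : 2 ≤ s) {n : ℕ}
    (est : (Fin n → Fin d → ℝ) × (Fin n → ℝ) → Fin d → ℝ)
    (x : Fin n → Fin d → ℝ) (e : Fin n → ℝ) :
    {β : Fin d → ℝ | β ∈ F3 d s ε ∧
        (fun i => est (x, fun k => signFun ((∑ j, x k j * β j) + e k)) i /
          l2norm (est (x, fun k => signFun ((∑ j, x k j * β j) + e k)))) =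
        fun i => β i / l2norm β}.ncard ≤ 2 ^ n := by
  classical
  have key := Set.ncard_le_ncard_of_injOn
    (f := fun (β : Fin d → ℝ) (k : Fin n) => decide (0 ≤ (∑ j, x k j * β j) + e k))
    (s := {β : Fin d → ℝ | β ∈ F3 d s ε ∧
        (fun i => est (x, fun k => signFun ((∑ j, x k j * β j) + e k)) i /
          l2norm (est (x, fun k => signFun ((∑ j, x k j * β j) + e k)))) =
        fun i => β i / l2norm β})
    (t := (Set.univ : Set (Fin n → Bool)))
    (fun β _ => Set.mem_univ _)
    ?_ Set.finite_univ
  · rw [Set.ncard_univ, Nat.card_eq_fintype_card] at key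
    simpa using key
  · intro β hβ β' hβ' hf
    have hsig : (fun k => signFun ((∑ j, x k j * β j) + e k)) =
        (fun k => signFun ((∑ j, x k j * β' j) + e k)) := by
      funext k
      have hk := congrFun hf k
      have hiff : (0 ≤ (∑ j, x k j * β j) + e k) ↔ (0 ≤ (∑ j, x k j * β' j) + e k) :=
        decide_eq_decide.mp hk
      simp only [signFun]
      exact if_congr hiff rfl rfl
    have e1 : (fun i => β i / l2norm β) = fun i => β' i / l2norm β' := by
      rw [← hβ.2, ← hβ'.2, hsig]
    exact F3_norm_injOn hε hs2 hβ.1 hβ'.1 e1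

end OneBitAux

set_option maxHeartbeats 1000000 in
theorem onebit_cs_approximate_recovery_lower_bound
    (n d s : ℕ) (hn : 1 ≤ n) (heven : Even s) (hs2 : 2 ≤ s) (hsd : s ≤ d)
    (ε σ : ℝ) (hε : 0 < ε) (hσ : 0 < σ)
    (hbound : 2 * (n : ℝ) * Real.log 2 + Real.log 2 ≤
      (1 / 2) * Real.log ((d.choose s : ℝ) * (s.choose (s / 2) : ℝ))) :
    ∃ ε' > (0 : ℝ),
      ∀ est : (Fin n → Fin d → ℝ) × (Fin n → ℝ) → (Fin d → ℝ),
        Measurable est → (∀ x, est x ∈ F3 d s ε) →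
        (1 / 2 : ℝ≥0∞) ≤
          ((uniformOn (F3 d s ε)).prod
              ((Measure.pi fun _ : Fin n => Measure.pi fun _ : Fin d =>
                  gaussianReal 0 (1 / (n : ℝ≥0))).prod
                (Measure.pi fun _ : Fin n => gaussianReal 0 ⟨σ ^ 2, sq_nonneg σ⟩)))
            {ω : (Fin d → ℝ) × ((Fin n → Fin d → ℝ) × (Fin n → ℝ)) |
              l2norm (fun i =>
                  est (ω.2.1, fun k => signFun ((∑ j, ω.2.1 k j * ω.1 j) + ω.2.2 k)) i /
                    l2norm (est (ω.2.1, fun k => signFun ((∑ j, ω.2.1 k j * ω.1 j) + ω.2.2 k))) -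
                  ω.1 i / l2norm ω.1) ≥ ε'} := by
  classical
  have hF : (F3 d s ε).Finite := OneBitAux.F3_finite d s ε
  have hM : 0 < d.choose s * s.choose (s / 2) :=
    Nat.mul_pos (Nat.choose_pos hsd) (Nat.choose_pos (Nat.div_le_self s 2))
  have hpow : 2 ^ (n + 1) ≤ d.choose s * s.choose (s / 2) :=
    OneBitAux.two_pow_le_of_log hM (by exact_mod_cast hbound)
  have hncard : 2 ^ (n + 1) ≤ (F3 d s ε).ncard :=
    le_trans hpow (OneBitAux.F3_ncard_ge hε heven hsd)
  have h2pow : 1 < 2 ^ (n + 1) := Nat.one_lt_two_pow_iff.mpr (Nat.succ_ne_zero n)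
  have hne : (F3 d s ε).Nonempty :=
    Set.nonempty_of_ncard_ne_zero (by omega)
  obtain ⟨a, ha, b, hb, hab⟩ : ∃ a ∈ F3 d s ε, ∃ b ∈ F3 d s ε, a ≠ b :=
    (Set.one_lt_ncard hF).1 (lt_of_lt_of_le h2pow hncard)
  -- the minimal distance between distinct normalized elements of F3
  set Pr : Finset ((Fin d → ℝ) × (Fin d → ℝ)) :=
    (hF.toFinset ×ˢ hF.toFinset).filter (fun p => p.1 ≠ p.2) with hPr
  have hPrne : Pr.Nonempty := ⟨(a, b), by
    simp only [hPr, Finset.mem_filter, Finset.mem_product, Set.Finite.mem_toFinset]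
    exact ⟨⟨ha, hb⟩, hab⟩⟩
  set ε' := Pr.inf' hPrne
    (fun p => l2norm (fun i => p.1 i / l2norm p.1 - p.2 i / l2norm p.2)) with hε'def
  have hε'pos : 0 < ε' := by
    rw [hε'def, Finset.lt_inf'_iff]
    rintro ⟨β, β'⟩ hp
    simp only [hPr, Finset.mem_filter, Finset.mem_product, Set.Finite.mem_toFinset] at hp
    apply OneBitAux.l2norm_pos
    intro hcontra
    apply hp.2
    apply OneBitAux.F3_norm_injOn hε hs2 hp.1.1 hp.1.2
    funext i
    have hi := congrFun hcontra i
    simpa [sub_eq_zero] using hi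
  have hmin : ∀ β ∈ F3 d s ε, ∀ β' ∈ F3 d s ε, β ≠ β' →
      ε' ≤ l2norm (fun i => β i / l2norm β - β' i / l2norm β') := by
    intro β hβ β' hβ' hbb
    rw [hε'def]
    exact Finset.inf'_le (b := (β, β')) _ (by
      simp only [hPr, Finset.mem_filter, Finset.mem_product, Set.Finite.mem_toFinset]
      exact ⟨⟨hβ, hβ'⟩, hbb⟩)
  refine ⟨ε', hε'pos, ?_⟩
  intro est hest hrange
  haveI hPprob : IsProbabilityMeasure (uniformOn (F3 d s ε)) :=
    uniformOn_isProbabilityMeasure hF hne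
  set Q := ((Measure.pi fun _ : Fin n => Measure.pi fun _ : Fin d =>
      gaussianReal 0 (1 / (n : ℝ≥0))).prod
        (Measure.pi fun _ : Fin n => gaussianReal 0 ⟨σ ^ 2, sq_nonneg σ⟩)) with hQ
  set μ := (uniformOn (F3 d s ε)).prod Q with hμ
  haveI hQprob : IsProbabilityMeasure Q := by
    haveI : ∀ _ : Fin n, IsProbabilityMeasure (gaussianReal 0 ⟨σ ^ 2, sq_nonneg σ⟩) :=
      fun _ => instIsProbabilityMeasureGaussianReal _ _
    rw [hQ]; infer_instance
  haveI hμprob : IsProbabilityMeasure μ := by rw [hμ]; infer_instance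
  set E := {ω : (Fin d → ℝ) × ((Fin n → Fin d → ℝ) × (Fin n → ℝ)) |
              l2norm (fun i =>
                  est (ω.2.1, fun k => signFun ((∑ j, ω.2.1 k j * ω.1 j) + ω.2.2 k)) i /
                    l2norm (est (ω.2.1, fun k => signFun ((∑ j, ω.2.1 k j * ω.1 j) + ω.2.2 k))) -
                  ω.1 i / l2norm ω.1) ≥ ε'} with hE
  -- measurability ingredients
  have hsign : Measurable signFun :=
    Measurable.ite (measurableSet_le measurable_const measurable_id)
      measurable_const measurable_const
  have hl2 : Measurable (l2norm (d := d)) :=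
    Real.continuous_sqrt.measurable.comp
      (Finset.measurable_sum Finset.univ fun i _ => (measurable_pi_apply i).pow_const 2)
  have hY : Measurable (fun ω : (Fin d → ℝ) × ((Fin n → Fin d → ℝ) × (Fin n → ℝ)) =>
      ((ω.2.1, fun k => signFun ((∑ j, ω.2.1 k j * ω.1 j) + ω.2.2 k)) :
        (Fin n → Fin d → ℝ) × (Fin n → ℝ))) := by
    refine (measurable_fst.comp measurable_snd).prodMk (measurable_pi_lambda _ fun k => ?_)
    refine hsign.comp ?_
    refine Measurable.add ?_ ((measurable_pi_apply k).comp (measurable_snd.comp measurable_snd))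
    refine Finset.measurable_sum Finset.univ fun j _ => ?_
    exact ((measurable_pi_apply j).comp
        ((measurable_pi_apply k).comp (measurable_fst.comp measurable_snd))).mul
      ((measurable_pi_apply j).comp measurable_fst)
  have hgm : Measurable (fun β : Fin d → ℝ => (fun i => β i / l2norm β : Fin d → ℝ)) :=
    measurable_pi_lambda _ fun i => (measurable_pi_apply i).div hl2
  set S := {ω : (Fin d → ℝ) × ((Fin n → Fin d → ℝ) × (Fin n → ℝ)) |
      ω.1 ∈ F3 d s ε ∧
      (fun i => est (ω.2.1, fun k => signFun ((∑ j, ω.2.1 k j * ω.1 j) + ω.2.2 k)) i /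
          l2norm (est (ω.2.1, fun k => signFun ((∑ j, ω.2.1 k j * ω.1 j) + ω.2.2 k)))) =
        fun i => ω.1 i / l2norm ω.1} with hS
  have hSmeas : MeasurableSet S := by
    have heq2 : {ω : (Fin d → ℝ) × ((Fin n → Fin d → ℝ) × (Fin n → ℝ)) |
        (fun i => est (ω.2.1, fun k => signFun ((∑ j, ω.2.1 k j * ω.1 j) + ω.2.2 k)) i /
            l2norm (est (ω.2.1, fun k => signFun ((∑ j, ω.2.1 k j * ω.1 j) + ω.2.2 k)))) =
          fun i => ω.1 i / l2norm ω.1} =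
        ⋂ i, {ω : (Fin d → ℝ) × ((Fin n → Fin d → ℝ) × (Fin n → ℝ)) |
          est (ω.2.1, fun k => signFun ((∑ j, ω.2.1 k j * ω.1 j) + ω.2.2 k)) i /
            l2norm (est (ω.2.1, fun k => signFun ((∑ j, ω.2.1 k j * ω.1 j) + ω.2.2 k))) -
          ω.1 i / l2norm ω.1 = 0} := by
      ext ω
      simp only [Set.mem_setOf_eq, Set.mem_iInter, funext_iff, sub_eq_zero]
    have h2 : MeasurableSet {ω : (Fin d → ℝ) × ((Fin n → Fin d → ℝ) × (Fin n → ℝ)) |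
        (fun i => est (ω.2.1, fun k => signFun ((∑ j, ω.2.1 k j * ω.1 j) + ω.2.2 k)) i /
            l2norm (est (ω.2.1, fun k => signFun ((∑ j, ω.2.1 k j * ω.1 j) + ω.2.2 k)))) =
          fun i => ω.1 i / l2norm ω.1} := by
      rw [heq2]
      refine MeasurableSet.iInter fun i => ?_
      have hm : Measurable (fun ω : (Fin d → ℝ) × ((Fin n → Fin d → ℝ) × (Fin n → ℝ)) =>
          est (ω.2.1, fun k => signFun ((∑ j, ω.2.1 k j * ω.1 j) + ω.2.2 k)) i /
            l2norm (est (ω.2.1, fun k => signFun ((∑ j, ω.2.1 k j * ω.1 j) + ω.2.2 k))) -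
          ω.1 i / l2norm ω.1) := by
        refine Measurable.sub ?_ ?_
        · exact (measurable_pi_apply i).comp (hgm.comp (hest.comp hY))
        · exact (measurable_pi_apply i).comp (hgm.comp measurable_fst)
      exact hm (measurableSet_singleton 0)
    rw [hS]
    exact MeasurableSet.inter (measurable_fst hF.measurableSet) h2
  -- slice bound
  have hslice : ∀ xe : (Fin n → Fin d → ℝ) × (Fin n → ℝ),
      uniformOn (F3 d s ε) ((fun β => (β, xe)) ⁻¹' S) ≤ 1 / 2 := by
    intro xe
    have hpre : (fun β : Fin d → ℝ => (β, xe)) ⁻¹' S =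
        {β : Fin d → ℝ | β ∈ F3 d s ε ∧
          (fun i => est (xe.1, fun k => signFun ((∑ j, xe.1 k j * β j) + xe.2 k)) i /
              l2norm (est (xe.1, fun k => signFun ((∑ j, xe.1 k j * β j) + xe.2 k)))) =
            fun i => β i / l2norm β} := by
      rw [hS]; rfl
    have hsub2 : (fun β : Fin d → ℝ => (β, xe)) ⁻¹' S ⊆ F3 d s ε := by
      rw [hpre]; exact fun β hβ => hβ.1
    have hfin2 : ((fun β : Fin d → ℝ => (β, xe)) ⁻¹' S).Finite := hF.subset hsub2
    have hcount2 : Measure.count ((fun β : Fin d → ℝ => (β, xe)) ⁻¹' S) ≤ (2 ^ n : ℕ) := by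
      rw [OneBitAux.count_eq_ncard hfin2]
      have := OneBitAux.slice_ncard_le hε hs2 est xe.1 xe.2
      rw [hpre]
      exact_mod_cast this
    have hcountF3 : ((2 : ℝ≥0∞) ^ (n + 1)) ≤ Measure.count (F3 d s ε) := by
      rw [OneBitAux.count_eq_ncard hF]
      have : ((2 ^ (n + 1) : ℕ) : ℝ≥0∞) ≤ ((F3 d s ε).ncard : ℝ≥0∞) := by
        exact_mod_cast hncard
      calc ((2 : ℝ≥0∞) ^ (n + 1)) = ((2 ^ (n + 1) : ℕ) : ℝ≥0∞) := by push_cast; ring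
        _ ≤ _ := this
    have happly : uniformOn (F3 d s ε) ((fun β : Fin d → ℝ => (β, xe)) ⁻¹' S) =
        (Measure.count (F3 d s ε))⁻¹ *
          Measure.count (F3 d s ε ∩ ((fun β : Fin d → ℝ => (β, xe)) ⁻¹' S)) :=
      cond_apply hF.measurableSet Measure.count _
    rw [happly, Set.inter_eq_self_of_subset_right hsub2]
    have hinv : (Measure.count (F3 d s ε))⁻¹ ≤ ((2 : ℝ≥0∞) ^ (n + 1))⁻¹ :=
      ENNReal.inv_le_inv' hcountF3
    calc (Measure.count (F3 d s ε))⁻¹ *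
          Measure.count ((fun β : Fin d → ℝ => (β, xe)) ⁻¹' S)
        ≤ ((2 : ℝ≥0∞) ^ (n + 1))⁻¹ * ((2 ^ n : ℕ) : ℝ≥0∞) := mul_le_mul' hinv hcount2
      _ = 1 / 2 := by
          have h0 : ((2 : ℝ≥0∞) ^ n) ≠ 0 := pow_ne_zero _ (by norm_num)
          have ht : ((2 : ℝ≥0∞) ^ n) ≠ ⊤ := ENNReal.pow_ne_top (by norm_num)
          have hcast : ((2 ^ n : ℕ) : ℝ≥0∞) = (2 : ℝ≥0∞) ^ n := by push_cast; ring
          rw [hcast, pow_succ, ENNReal.mul_inv (Or.inl h0) (Or.inl ht),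
            mul_comm ((2 : ℝ≥0∞) ^ n)⁻¹ _, mul_assoc,
            ENNReal.inv_mul_cancel h0 ht, mul_one, one_div]
  -- the measure of S
  have hμS : μ S ≤ 1 / 2 := by
    rw [hμ, Measure.prod_apply_symm hSmeas]
    calc ∫⁻ xe, uniformOn (F3 d s ε) ((fun β => (β, xe)) ⁻¹' S) ∂Q
        ≤ ∫⁻ _, 1 / 2 ∂Q := lintegral_mono fun xe => hslice xe
      _ = 1 / 2 := by rw [lintegral_const, measure_univ, mul_one]
  -- the bad set
  have hμBad : μ {ω : (Fin d → ℝ) × ((Fin n → Fin d → ℝ) × (Fin n → ℝ)) |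
      ω.1 ∉ F3 d s ε} = 0 := by
    have hbadeq : {ω : (Fin d → ℝ) × ((Fin n → Fin d → ℝ) × (Fin n → ℝ)) |
        ω.1 ∉ F3 d s ε} = (F3 d s ε)ᶜ ×ˢ Set.univ := by
      ext ω
      simp [Set.mem_prod]
    rw [hbadeq, hμ, Measure.prod_prod]
    have hc0 : uniformOn (F3 d s ε) (F3 d s ε)ᶜ = 0 := by
      rw [measure_compl hF.measurableSet (measure_ne_top _ _), measure_univ,
        uniformOn_self hF hne, tsub_self]
    rw [hc0, zero_mul]
  -- E^c ⊆ S ∪ Bad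
  have hcompl : Eᶜ ⊆ S ∪ {ω : (Fin d → ℝ) × ((Fin n → Fin d → ℝ) × (Fin n → ℝ)) |
      ω.1 ∉ F3 d s ε} := by
    intro ω hω
    by_cases h1 : ω.1 ∈ F3 d s ε
    · left
      rw [hS]
      refine ⟨h1, ?_⟩
      by_contra hne2
      have hbmem : est (ω.2.1, fun k => signFun ((∑ j, ω.2.1 k j * ω.1 j) + ω.2.2 k)) ∈
          F3 d s ε := hrange _
      have hne3 : est (ω.2.1, fun k => signFun ((∑ j, ω.2.1 k j * ω.1 j) + ω.2.2 k)) ≠ ω.1 := by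
        intro h
        exact hne2 (by rw [h])
      have hge := hmin _ hbmem _ h1 hne3
      exact hω hge
    · right; exact h1
  -- conclude
  have hEc : μ Eᶜ ≤ 1 / 2 := by
    calc μ Eᶜ ≤ μ (S ∪ {ω : (Fin d → ℝ) × ((Fin n → Fin d → ℝ) × (Fin n → ℝ)) |
          ω.1 ∉ F3 d s ε}) := measure_mono hcompl
      _ ≤ μ S + μ {ω : (Fin d → ℝ) × ((Fin n → Fin d → ℝ) × (Fin n → ℝ)) |
          ω.1 ∉ F3 d s ε} := measure_union_le _ _
      _ ≤ 1 / 2 + 0 := add_le_add hμS (le_of_eq hμBad)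
      _ = 1 / 2 := by rw [add_zero]
  have hunion : (1 : ℝ≥0∞) ≤ μ E + μ Eᶜ := by
    calc (1 : ℝ≥0∞) = μ Set.univ := (measure_univ (μ := μ)).symm
      _ = μ (E ∪ Eᶜ) := by rw [Set.union_compl_self]
      _ ≤ μ E + μ Eᶜ := measure_union_le _ _
  have hfinal : (1 / 2 : ℝ≥0∞) + 1 / 2 ≤ μ E + 1 / 2 := by
    calc (1 / 2 : ℝ≥0∞) + 1 / 2 = 1 := by rw [one_div, ENNReal.inv_two_add_inv_two]
      _ ≤ μ E + μ Eᶜ := hunion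
      _ ≤ μ E + 1 / 2 := add_le_add_right hEc _
  exact (ENNReal.add_le_add_iff_right (by norm_num)).mp hfinal
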